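/- Let G=(V0,V1,E) be a connectivity game with simplified derivative sequence (G'_k) and reduced derivative sequence (G''_k) (with matching edge choices T'_k=T''_k), and stabilization point s. Then G'_s is strongly connected if and only if both G''_s and G are strongly connected. -/

import Mathlib

namespace Games

universe u

variable {V : Type u}

/-- A connectivity game: player 0's positions `V0`, player 1's positions `V1`,
and the edge set `E`. -/
structure ConnGame (V : Type u) where
  V0 : Set V
  V1 : Set V
  E : Set (V × V)

namespace ConnGame

/-- The vertex set `V = V0 ∪ V1`. -/
def verts (G : ConnGame V) : Set V := G.V0 ∪ G.V1

/-- The sub-game of `G` played on the vertex set `X` (edges restricted to `X`). -/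
def restrict (G : ConnGame V) (X : Set V) : ConnGame V :=
  ⟨G.V0 ∩ X, G.V1 ∩ X, {e | e ∈ G.E ∧ e.1 ∈ X ∧ e.2 ∈ X}⟩

end ConnGame

/-- Reachability by a directed path in the digraph with edge set `E`. -/
def Reach (E : Set (V × V)) : V → V → Prop :=
  Relation.ReflTransGen fun x y => (x, y) ∈ E

/-- Reachability by a directed path staying inside `X`. -/
def ReachWithin (E : Set (V × V)) (X : Set V) : V → V → Prop :=
  Relation.ReflTransGen fun x y => (x, y) ∈ E ∧ x ∈ X ∧ y ∈ X

/-- The set of strongly connected components of the digraph with vertex set `W`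
and edge set `E`. -/
def SCCs (W : Set V) (E : Set (V × V)) : Set (Set V) :=
  {S | ∃ v ∈ W, S = {u | u ∈ W ∧ Reach E v u ∧ Reach E u v}}

/-- The digraph with vertex set `W` and edge set `E` is strongly connected. -/
def StronglyConnected (W : Set V) (E : Set (V × V)) : Prop :=
  ∀ a ∈ W, ∀ b ∈ W, Reach E a b

/-- `E⁻¹(S)`: the set of predecessors of `S`. -/
def preds (E : Set (V × V)) (S : Set V) : Set V := {u | ∃ s ∈ S, (u, s) ∈ E}

/-- `Force(U, S) = {v ∈ (E⁻¹(S) \ S) ∩ U : E(v) ⊆ S}`. -/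
def Force (E : Set (V × V)) (U S : Set V) : Set V :=
  {v | v ∈ (preds E S \ S) ∩ U ∧ ∀ u, (v, u) ∈ E → u ∈ S}

/-- `X` is a forced trap (FT) w.r.t. player 1's positions `V1` and edge set `E`:
either `X` is a singleton, or `|X| > 1`, `E(X ∩ V1) ⊆ X` and any two vertices of `X`
are strongly connected within `X`. -/
def IsFT (V1 : Set V) (E : Set (V × V)) (X : Set V) : Prop :=
  (∃ v, X = {v}) ∨
    (X.Nontrivial ∧ (∀ v ∈ X ∩ V1, ∀ u, (v, u) ∈ E → u ∈ X) ∧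
      ∀ a ∈ X, ∀ b ∈ X, ReachWithin E X a b)

/-- The derivative sequence of `G`: `deriv G k = (E_k, U_k, F_k)`. -/
def deriv (G : ConnGame V) : ℕ → Set (V × V) × Set V × Set V
  | 0 => ({e | e ∈ G.E ∧ e.1 ∈ G.V0}, G.V1, ∅)
  | k + 1 =>
    let p := deriv G k
    let F : Set V := ⋃ S ∈ SCCs G.verts p.1, Force G.E p.2.1 S
    (p.1 ∪ {e | e ∈ G.E ∧ e.1 ∈ F}, p.2.1 \ F, F)

/-- The edge set `E_k` of the `k`-th derivative `G_k`. -/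
def Ek (G : ConnGame V) (k : ℕ) : Set (V × V) := (deriv G k).1

/-- The set `U_k`. -/
def Uk (G : ConnGame V) (k : ℕ) : Set V := (deriv G k).2.1

/-- The set `F_k`. -/
def Fk (G : ConnGame V) (k : ℕ) : Set V := (deriv G k).2.2

/-- The stabilization point: the minimal `k > 0` with `F_k = ∅`. -/
noncomputable def stab (G : ConnGame V) : ℕ := sInf {k | 0 < k ∧ Fk G k = ∅}

/-- Finite plays (histories) consistent with the player-0 strategy `s`, starting
at `v0`: at a player-0 position the strategy's (legal) move is played, at a
player-1 position any legal move may be played. -/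
inductive Hist (G : ConnGame V) (s : List V → V) (v0 : V) : List V → Prop
  | base : Hist G s v0 [v0]
  | move0 (h : List V) (v : V) (hh : Hist G s v0 (h ++ [v])) (hv : v ∈ G.V0)
      (he : (v, s (h ++ [v])) ∈ G.E) : Hist G s v0 ((h ++ [v]) ++ [s (h ++ [v])])
  | move1 (h : List V) (v u : V) (hh : Hist G s v0 (h ++ [v])) (hv : v ∈ G.V1)
      (he : (v, u) ∈ G.E) : Hist G s v0 ((h ++ [v]) ++ [u])

/-- The prefix `ρ 0, …, ρ n` of an infinite sequence. -/
def prefixUpTo (ρ : ℕ → V) (n : ℕ) : List V := List.ofFn fun i : Fin (n + 1) => ρ i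

/-- `ρ` is an infinite play consistent with strategy `s` from `v0`. -/
def InfPlay (G : ConnGame V) (s : List V → V) (v0 : V) (ρ : ℕ → V) : Prop :=
  ∀ n, Hist G s v0 (prefixUpTo ρ n)

/-- The set of vertices visited infinitely often by `ρ`. -/
def InfSet (ρ : ℕ → V) : Set V := {v | ∀ N, ∃ n, N ≤ n ∧ ρ n = v}

/-- `s` is a winning strategy for player 0 from `v0` in the connectivity game on `G`:
along every consistent history player 0's moves are legal and the play is never stuck
(so all maximal consistent plays are infinite), and every infinite consistent play
visits every vertex of `G` infinitely often. -/
def WinsConnFrom (G : ConnGame V) (s : List V → V) (v0 : V) : Prop :=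
  (∀ h v, Hist G s v0 (h ++ [v]) →
      (v ∈ G.V0 → (v, s (h ++ [v])) ∈ G.E) ∧ (v ∈ G.V1 → ∃ u, (v, u) ∈ G.E)) ∧
    ∀ ρ : ℕ → V, InfPlay G s v0 ρ → InfSet ρ = G.verts

/-- `G` is forced-connected: player 0 wins the connectivity game from every vertex. -/
def ForcedConnected (G : ConnGame V) : Prop :=
  ∀ v ∈ G.verts, ∃ s : List V → V, WinsConnFrom G s v

/-- The simplified derivative sequence `G'_k`, where the choice function `c`
selects one outgoing edge per forced vertex: `deriv' G c k = (E'_k, U_k, F_k)`. -/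
def deriv' (G : ConnGame V) (c : V → V) : ℕ → Set (V × V) × Set V × Set V
  | 0 => ({e | e ∈ G.E ∧ e.1 ∈ G.V0}, G.V1, ∅)
  | k + 1 =>
    let p := deriv' G c k
    let F : Set V := ⋃ S ∈ SCCs G.verts p.1, Force G.E p.2.1 S
    (p.1 ∪ {e | ∃ f ∈ F, e = (f, c f)}, p.2.1 \ F, F)

/-- The edge set `E'_k` of the simplified derivative `G'_k`. -/
def Ek' (G : ConnGame V) (c : V → V) (k : ℕ) : Set (V × V) := (deriv' G c k).1

/-- The set `F_k` of the simplified derivative sequence. -/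
def Fk' (G : ConnGame V) (c : V → V) (k : ℕ) : Set V := (deriv' G c k).2.2

/-- The stabilization point of the simplified derivative sequence. -/
noncomputable def stab' (G : ConnGame V) (c : V → V) : ℕ :=
  sInf {k | 0 < k ∧ Fk' G c k = ∅}

/-- The reduced derivative sequence `G''_k` on the vertex set `V0`:
`deriv'' G c k = (E''_k, U''_k, F''_k)`. -/
def deriv'' (G : ConnGame V) (c : V → V) : ℕ → Set (V × V) × Set V × Set V
  | 0 => (∅, G.V1, ∅)
  | k + 1 =>
    let p := deriv'' G c k
    let F : Set V := ⋃ S ∈ SCCs G.V0 p.1, Force G.E p.2.1 S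
    (p.1 ∪ {e | ∃ f ∈ F, (e.1, f) ∈ G.E ∧ e.2 = c f}, p.2.1 \ F, F)

/-- The edge set `E''_k` of the reduced derivative `G''_k`. -/
def Ek'' (G : ConnGame V) (c : V → V) (k : ℕ) : Set (V × V) := (deriv'' G c k).1

/-- The set `F''_k` of the reduced derivative sequence. -/
def Fk'' (G : ConnGame V) (c : V → V) (k : ℕ) : Set V := (deriv'' G c k).2.2

/-- The stabilization point of the reduced derivative sequence. -/
noncomputable def stab'' (G : ConnGame V) (c : V → V) : ℕ :=
  sInf {k | 0 < k ∧ Fk'' G c k = ∅}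

/-- The derivation forest: `forest G k = (N_k, Son_k)`. -/
def forest (G : ConnGame V) : ℕ → Set (Set V) × Set (Set V × Set V)
  | 0 => ({S | ∃ v ∈ G.verts, S = {v}}, ∅)
  | k + 1 =>
    let p := forest G k
    let C : Set (Set V) := SCCs G.verts (Ek G (k + 1)) \ p.1
    (p.1 ∪ C, p.2 ∪ {q | q.1 ∈ C ∧ q.2 ∈ SCCs G.verts (Ek G k) ∧ q.2 ⊂ q.1})

/-- The node set `N` of the derivation forest `Γ(G) = Γ_s(G)`. -/
noncomputable def forestN (G : ConnGame V) : Set (Set V) := (forest G (stab G)).1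

/-- The son relation `Son` of the derivation forest `Γ(G) = Γ_s(G)`. -/
noncomputable def forestSon (G : ConnGame V) : Set (Set V × Set V) :=
  (forest G (stab G)).2



/-! ### Auxiliary material for Statement 9 -/

/-- Edges of `G'_0`: `E`-edges with source in `V0`. -/
def E0 (G : ConnGame V) : Set (V × V) := {e | e ∈ G.E ∧ e.1 ∈ G.V0}

/-- One chosen edge per vertex of `A`. -/
def chosen (c : V → V) (A : Set V) : Set (V × V) := {e | ∃ f ∈ A, e = (f, c f)}

/-- The two-step composition edges through `A`. -/
def twoStep (G : ConnGame V) (c : V → V) (A : Set V) : Set (V × V) :=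
  {e | ∃ f ∈ A, (e.1, f) ∈ G.E ∧ e.2 = c f}

/-- Accumulated forced vertices of the simplified derivative sequence. -/
def AA (G : ConnGame V) (c : V → V) : ℕ → Set V
  | 0 => ∅
  | k + 1 => AA G c k ∪ (deriv' G c (k + 1)).2.2

lemma chosen_union (c : V → V) (A B : Set V) :
    chosen c (A ∪ B) = chosen c A ∪ chosen c B := by
  ext e; simp only [chosen, Set.mem_setOf_eq, Set.mem_union]
  constructor
  · rintro ⟨f, (hf | hf), rfl⟩
    · exact Or.inl ⟨f, hf, rfl⟩
    · exact Or.inr ⟨f, hf, rfl⟩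
  · rintro (⟨f, hf, rfl⟩ | ⟨f, hf, rfl⟩)
    · exact ⟨f, Or.inl hf, rfl⟩
    · exact ⟨f, Or.inr hf, rfl⟩

lemma twoStep_union (G : ConnGame V) (c : V → V) (A B : Set V) :
    twoStep G c (A ∪ B) = twoStep G c A ∪ twoStep G c B := by
  ext e; simp only [twoStep, Set.mem_setOf_eq, Set.mem_union]
  constructor
  · rintro ⟨f, (hf | hf), h1, h2⟩
    · exact Or.inl ⟨f, hf, h1, h2⟩
    · exact Or.inr ⟨f, hf, h1, h2⟩
  · rintro (⟨f, hf, h1, h2⟩ | ⟨f, hf, h1, h2⟩)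
    · exact ⟨f, Or.inl hf, h1, h2⟩
    · exact ⟨f, Or.inr hf, h1, h2⟩

lemma src_V0 {G : ConnGame V} (hdisj : Disjoint G.V0 G.V1)
    (hEsub : G.E ⊆ (G.V0 ×ˢ G.V1) ∪ (G.V1 ×ˢ G.V0))
    {v u : V} (he : (v, u) ∈ G.E) (hu : u ∈ G.V1) : v ∈ G.V0 := by
  rcases hEsub he with h | h
  · exact h.1
  · exact absurd hu (Set.disjoint_left.mp hdisj h.2)

lemma tgt_V0 {G : ConnGame V} (hdisj : Disjoint G.V0 G.V1)
    (hEsub : G.E ⊆ (G.V0 ×ˢ G.V1) ∪ (G.V1 ×ˢ G.V0))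
    {v u : V} (he : (v, u) ∈ G.E) (hv : v ∈ G.V1) : u ∈ G.V0 := by
  rcases hEsub he with h | h
  · exact absurd hv (Set.disjoint_left.mp hdisj h.1)
  · exact h.2

lemma reach_up {G : ConnGame V} (hdisj : Disjoint G.V0 G.V1)
    (hEsub : G.E ⊆ (G.V0 ×ˢ G.V1) ∪ (G.V1 ×ˢ G.V0))
    {c : V → V} {A : Set V} (hA : ∀ f ∈ A, f ∈ G.V1 ∧ (f, c f) ∈ G.E) {x y : V}
    (h : Reach (twoStep G c A) x y) : Reach (E0 G ∪ chosen c A) x y := by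
  induction h with
  | refl => exact .refl
  | tail _ he ih =>
      obtain ⟨f, hf, hbf, rfl⟩ := he
      have hf1 := (hA f hf).1
      have hb0 := src_V0 hdisj hEsub hbf hf1
      exact (ih.tail (Or.inl ⟨hbf, hb0⟩)).tail (Or.inr ⟨f, hf, rfl⟩)

lemma reach_down {G : ConnGame V} (hdisj : Disjoint G.V0 G.V1)
    (hEsub : G.E ⊆ (G.V0 ×ˢ G.V1) ∪ (G.V1 ×ˢ G.V0))
    {c : V → V} {A : Set V} (hA : ∀ f ∈ A, f ∈ G.V1 ∧ (f, c f) ∈ G.E) {x y : V}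
    (hy : y ∈ G.V0) (h : Reach (E0 G ∪ chosen c A) x y) :
    (x ∈ G.V0 → Reach (twoStep G c A) x y) ∧
      (x ∈ G.V1 → x ∈ A ∧ Reach (twoStep G c A) (c x) y) := by
  induction h using Relation.ReflTransGen.head_induction_on with
  | refl =>
      exact ⟨fun _ => .refl, fun hx1 => absurd hy (Set.disjoint_right.mp hdisj hx1)⟩
  | @head a b hab hbc ih =>
      rcases hab with ⟨habE, ha0⟩ | ⟨f, hf, heq⟩
      · have hb1 : b ∈ G.V1 := by
          rcases hEsub habE with h' | h'
          · exact h'.2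
          · exact absurd ha0 (Set.disjoint_right.mp hdisj h'.1)
        obtain ⟨hbA, hr⟩ := ih.2 hb1
        exact ⟨fun _ => .head ⟨b, hbA, habE, rfl⟩ hr,
          fun ha1 => absurd ha1 (Set.disjoint_left.mp hdisj ha0)⟩
      · injection heq with h1 h2
        subst h1; subst h2
        have ha1 := (hA a hf).1
        have hae := (hA a hf).2
        have hca0 : c a ∈ G.V0 := tgt_V0 hdisj hEsub hae ha1
        exact ⟨fun ha0 => absurd ha1 (Set.disjoint_left.mp hdisj ha0),
          fun _ => ⟨hf, ih.1 hca0⟩⟩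

lemma force_union_eq {G : ConnGame V} (hdisj : Disjoint G.V0 G.V1)
    (hEsub : G.E ⊆ (G.V0 ×ˢ G.V1) ∪ (G.V1 ×ˢ G.V0))
    {c : V → V} {A U : Set V}
    (hA : ∀ f ∈ A, f ∈ G.V1 ∧ (f, c f) ∈ G.E) (hU : U ⊆ G.V1)
    (hUA : ∀ v ∈ U, v ∉ A) :
    (⋃ S ∈ SCCs G.verts (E0 G ∪ chosen c A), Force G.E U S) =
      ⋃ S ∈ SCCs G.V0 (twoStep G c A), Force G.E U S := by
  ext v
  simp only [Set.mem_iUnion, exists_prop]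
  constructor
  · rintro ⟨S, ⟨w, hw, rfl⟩, ⟨⟨⟨s, ⟨hsV, hws, hsw⟩, hvs⟩, hvS⟩, hvU⟩, hcl⟩
    have hv1 : v ∈ G.V1 := hU hvU
    have hs0 : s ∈ G.V0 := tgt_V0 hdisj hEsub hvs hv1
    refine ⟨{u | u ∈ G.V0 ∧ Reach (twoStep G c A) s u ∧ Reach (twoStep G c A) u s},
      ⟨s, hs0, rfl⟩, ⟨⟨⟨s, ⟨hs0, .refl, .refl⟩, hvs⟩, ?_⟩, hvU⟩, ?_⟩
    · intro hvT
      exact absurd hv1 (Set.disjoint_left.mp hdisj hvT.1)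
    · intro u hvu
      have hu0 : u ∈ G.V0 := tgt_V0 hdisj hEsub hvu hv1
      obtain ⟨huV, hwu, huw⟩ := hcl u hvu
      have h1 : Reach (E0 G ∪ chosen c A) s u := hsw.trans hwu
      have h2 : Reach (E0 G ∪ chosen c A) u s := huw.trans hws
      exact ⟨hu0, (reach_down hdisj hEsub hA hu0 h1).1 hs0,
        (reach_down hdisj hEsub hA hs0 h2).1 hu0⟩
  · rintro ⟨T, ⟨w, hw0, rfl⟩, ⟨⟨⟨s, ⟨hs0, hws, hsw⟩, hvs⟩, hvT⟩, hvU⟩, hcl⟩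
    have hv1 : v ∈ G.V1 := hU hvU
    have hvA : v ∉ A := hUA v hvU
    refine ⟨{u | u ∈ G.verts ∧ Reach (E0 G ∪ chosen c A) w u ∧
        Reach (E0 G ∪ chosen c A) u w}, ⟨w, Or.inl hw0, rfl⟩,
      ⟨⟨⟨s, ⟨Or.inl hs0, reach_up hdisj hEsub hA hws,
        reach_up hdisj hEsub hA hsw⟩, hvs⟩, ?_⟩, hvU⟩, ?_⟩
    · rintro ⟨hvV, hwv, hvw⟩
      rcases Relation.ReflTransGen.cases_head hvw with h1 | ⟨z, hz, _⟩
      · exact absurd hw0 (Set.disjoint_right.mp hdisj (h1 ▸ hv1))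
      · rcases hz with ⟨_, hv0⟩ | ⟨f, hfA, heq⟩
        · exact absurd hv1 (Set.disjoint_left.mp hdisj hv0)
        · injection heq with h1 h2
          exact hvA (h1 ▸ hfA)
    · intro u hvu
      obtain ⟨hu0, hwu, huw⟩ := hcl u hvu
      exact ⟨Or.inl hu0, reach_up hdisj hEsub hA hwu, reach_up hdisj hEsub hA huw⟩

lemma derivs_match {G : ConnGame V} (hdisj : Disjoint G.V0 G.V1)
    (hEsub : G.E ⊆ (G.V0 ×ˢ G.V1) ∪ (G.V1 ×ˢ G.V0))
    {c : V → V} (hc : ∀ v : V, (∃ u, (v, u) ∈ G.E) → (v, c v) ∈ G.E) (k : ℕ) :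
    (deriv' G c k).2.1 = G.V1 \ AA G c k ∧
    (∀ f ∈ AA G c k, f ∈ G.V1 ∧ (f, c f) ∈ G.E) ∧
    (deriv' G c k).1 = E0 G ∪ chosen c (AA G c k) ∧
    (deriv'' G c k).1 = twoStep G c (AA G c k) ∧
    (deriv'' G c k).2.1 = (deriv' G c k).2.1 ∧
    (deriv'' G c k).2.2 = (deriv' G c k).2.2 := by
  induction k with
  | zero =>
      refine ⟨by simp [deriv', AA], by simp [AA], ?_, ?_, by simp [deriv', deriv''], by simp [deriv', deriv'']⟩
      · show (deriv' G c 0).1 = E0 G ∪ chosen c (∅ : Set V)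
        have : chosen c (∅ : Set V) = ∅ := by ext e; simp [chosen]
        rw [this, Set.union_empty]; rfl
      · show (deriv'' G c 0).1 = twoStep G c (∅ : Set V)
        have : twoStep G c (∅ : Set V) = ∅ := by ext e; simp [twoStep]
        rw [this]; rfl
  | succ k ih =>
      obtain ⟨hU, hA, hE', hE'', hU2, _⟩ := ih
      have hF'def : (deriv' G c (k + 1)).2.2 =
          ⋃ S ∈ SCCs G.verts (deriv' G c k).1, Force G.E (deriv' G c k).2.1 S := rfl
      have hF''def : (deriv'' G c (k + 1)).2.2 =
          ⋃ S ∈ SCCs G.V0 (deriv'' G c k).1, Force G.E (deriv'' G c k).2.1 S := rfl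
      have hFeq : (deriv'' G c (k + 1)).2.2 = (deriv' G c (k + 1)).2.2 := by
        rw [hF''def, hF'def, hE'', hE', hU2, hU]
        exact (force_union_eq hdisj hEsub hA Set.diff_subset (fun v hv => hv.2)).symm
      have hFprop : ∀ f ∈ (deriv' G c (k + 1)).2.2, f ∈ G.V1 ∧ (f, c f) ∈ G.E := by
        intro f hf
        rw [hF'def] at hf
        simp only [Set.mem_iUnion, exists_prop] at hf
        obtain ⟨S, _, ⟨⟨⟨s, _, hfs⟩, _⟩, hfU⟩, _⟩ := hf
        rw [hU] at hfU
        exact ⟨hfU.1, hc f ⟨s, hfs⟩⟩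
      have hAA : AA G c (k + 1) = AA G c k ∪ (deriv' G c (k + 1)).2.2 := rfl
      refine ⟨?_, ?_, ?_, ?_, ?_, hFeq⟩
      · show (deriv' G c k).2.1 \ (deriv' G c (k + 1)).2.2 = G.V1 \ AA G c (k + 1)
        rw [hU, hAA, Set.diff_diff]
      · intro f hf
        rw [hAA] at hf
        rcases hf with hf | hf
        · exact hA f hf
        · exact hFprop f hf
      · show (deriv' G c k).1 ∪ chosen c (deriv' G c (k + 1)).2.2 =
          E0 G ∪ chosen c (AA G c (k + 1))
        rw [hE', hAA, chosen_union, Set.union_assoc]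
      · show (deriv'' G c k).1 ∪ twoStep G c (deriv'' G c (k + 1)).2.2 =
          twoStep G c (AA G c (k + 1))
        rw [hE'', hAA, twoStep_union, hFeq]
      · show (deriv'' G c k).2.1 \ (deriv'' G c (k + 1)).2.2 =
          (deriv' G c k).2.1 \ (deriv' G c (k + 1)).2.2
        rw [hU2, hFeq]

lemma stab'_spec [Fintype V] (G : ConnGame V) (c : V → V) :
    0 < stab' G c ∧ Fk' G c (stab' G c) = ∅ := by
  have hne : {k | 0 < k ∧ Fk' G c k = ∅}.Nonempty := by
    by_contra hcon
    rw [Set.not_nonempty_iff_eq_empty] at hcon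
    have hstep : ∀ k : ℕ, ((deriv' G c (k + 1)).2.1).ncard < ((deriv' G c k).2.1).ncard := by
      intro k
      have hFne : (deriv' G c (k + 1)).2.2 ≠ ∅ := by
        intro h
        have hmem : (k + 1) ∈ {k | 0 < k ∧ Fk' G c k = ∅} := ⟨Nat.succ_pos k, h⟩
        rw [hcon] at hmem
        exact hmem
      have hFsub : (deriv' G c (k + 1)).2.2 ⊆ (deriv' G c k).2.1 := by
        intro v hv
        have hv' : v ∈ ⋃ S ∈ SCCs G.verts (deriv' G c k).1,
            Force G.E (deriv' G c k).2.1 S := hv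
        simp only [Set.mem_iUnion, exists_prop] at hv'
        obtain ⟨S, _, hvF⟩ := hv'
        exact hvF.1.2
      have heq : (deriv' G c (k + 1)).2.1 =
          (deriv' G c k).2.1 \ (deriv' G c (k + 1)).2.2 := rfl
      have hss : (deriv' G c (k + 1)).2.1 ⊂ (deriv' G c k).2.1 := by
        rw [heq]
        refine ⟨Set.diff_subset, fun hsub => ?_⟩
        obtain ⟨v, hv⟩ := Set.nonempty_iff_ne_empty.mpr hFne
        exact (hsub (hFsub hv)).2 hv
      exact Set.ncard_lt_ncard hss (Set.toFinite _)
    have hb : ∀ k : ℕ, ((deriv' G c k).2.1).ncard + k ≤ ((deriv' G c 0).2.1).ncard := by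
      intro k
      induction k with
      | zero => simp
      | succ n ihn =>
          have := hstep n
          omega
    have := hb (((deriv' G c 0).2.1).ncard + 1)
    omega
  have hmem := Nat.sInf_mem hne
  exact ⟨hmem.1, hmem.2⟩

lemma Fk'_succ_empty {G : ConnGame V} {c : V → V} {k : ℕ}
    (h : (deriv' G c (k + 1)).2.2 = ∅) : (deriv' G c (k + 2)).2.2 = ∅ := by
  have hE : (deriv' G c (k + 1)).1 = (deriv' G c k).1 := by
    have h1 : (deriv' G c (k + 1)).1 =
        (deriv' G c k).1 ∪ chosen c (deriv' G c (k + 1)).2.2 := rfl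
    have h2 : chosen c (∅ : Set V) = ∅ := by ext e; simp [chosen]
    rw [h1, h, h2, Set.union_empty]
  have hUq : (deriv' G c (k + 1)).2.1 = (deriv' G c k).2.1 := by
    have h1 : (deriv' G c (k + 1)).2.1 =
        (deriv' G c k).2.1 \ (deriv' G c (k + 1)).2.2 := rfl
    rw [h1, h, Set.diff_empty]
  have h2 : (deriv' G c (k + 2)).2.2 =
      ⋃ S ∈ SCCs G.verts (deriv' G c (k + 1)).1,
        Force G.E (deriv' G c (k + 1)).2.1 S := rfl
  rw [h2, hE, hUq]
  exact h


/-- With matching edge choices, the simplified derivative `G'_s` at the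
stabilization point `s` is strongly connected iff both the reduced derivative `G''_s`
(on vertex set `V0`) and `G` itself are strongly connected. -/
theorem stmt9 [Fintype V] (G : ConnGame V)
    (hdisj : Disjoint G.V0 G.V1)
    (hEsub : G.E ⊆ (G.V0 ×ˢ G.V1) ∪ (G.V1 ×ˢ G.V0))
    (c : V → V) (hc : ∀ v : V, (∃ u, (v, u) ∈ G.E) → (v, c v) ∈ G.E) :
    StronglyConnected G.verts (Ek' G c (stab' G c)) ↔
      (StronglyConnected G.V0 (Ek'' G c (stab' G c)) ∧
        StronglyConnected G.verts G.E) := by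
  obtain ⟨hs0, hsF⟩ := stab'_spec G c
  set s := stab' G c with hsdef
  obtain ⟨hU, hA, hE', hE'', hU2, hF2⟩ := derivs_match hdisj hEsub hc s
  set A := AA G c s with hAdef
  have hEk' : Ek' G c s = E0 G ∪ chosen c A := hE'
  have hEk'' : Ek'' G c s = twoStep G c A := hE''
  rw [hEk', hEk'']
  constructor
  · intro h
    constructor
    · intro a ha b hb
      exact (reach_down hdisj hEsub hA hb (h a (Or.inl ha) b (Or.inl hb))).1 ha
    · intro a ha b hb
      refine Relation.ReflTransGen.mono ?_ a b (h a ha b hb)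
      rintro x y (⟨hxy, _⟩ | ⟨f, hf, heq⟩)
      · exact hxy
      · injection heq with h1 h2
        subst h1; subst h2
        exact (hA x hf).2
  · rintro ⟨h'', hG⟩ a ha b hb
    by_cases htriv : ∀ x ∈ G.verts, ∀ y ∈ G.verts, x = y
    · have : a = b := htriv a ha b hb
      subst this; exact .refl
    push_neg at htriv
    obtain ⟨x0, hx0, y0, hy0, hxy0⟩ := htriv
    have hother : ∀ v : V, ∃ w ∈ G.verts, w ≠ v := by
      intro v
      by_cases h : v = x0
      · exact ⟨y0, hy0, fun hh => hxy0 (hh.trans h).symm⟩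
      · exact ⟨x0, hx0, fun hh => h hh.symm⟩
    have hout : ∀ v ∈ G.verts, ∃ z, (v, z) ∈ G.E := by
      intro v hv
      obtain ⟨w, hw, hwv⟩ := hother v
      rcases Relation.ReflTransGen.cases_head (hG v hv w hw) with h1 | ⟨z, hz, _⟩
      · exact absurd h1.symm hwv
      · exact ⟨z, hz⟩
    obtain ⟨v0, hv0⟩ : ∃ v0, v0 ∈ G.V0 := by
      obtain ⟨z, hz⟩ := hout x0 hx0
      rcases hEsub hz with h1 | h1
      · exact ⟨x0, h1.1⟩
      · exact ⟨z, h1.2⟩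
    have hV0scc : G.V0 ∈ SCCs G.V0 (twoStep G c A) := by
      refine ⟨v0, hv0, ?_⟩
      ext u
      simp only [Set.mem_setOf_eq]
      constructor
      · intro hu
        exact ⟨hu, h'' v0 hv0 u hu, h'' u hu v0 hv0⟩
      · exact fun h => h.1
    have hs1 : (deriv' G c (s + 1)).2.2 = ∅ := by
      obtain ⟨m, hm⟩ := Nat.exists_eq_succ_of_ne_zero (Nat.pos_iff_ne_zero.mp hs0)
      have hF : (deriv' G c (m + 1)).2.2 = ∅ := by
        have h0 : Fk' G c s = ∅ := hsF
        rw [hm] at h0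
        exact h0
      have h2 := Fk'_succ_empty hF
      rw [hm]
      exact h2
    have hforce0 : Force G.E (G.V1 \ A) G.V0 = ∅ := by
      have hdef : (deriv' G c (s + 1)).2.2 =
          ⋃ S ∈ SCCs G.verts (deriv' G c s).1, Force G.E (deriv' G c s).2.1 S := rfl
      rw [hdef, hE', hU,
        force_union_eq hdisj hEsub hA Set.diff_subset (fun v hv => hv.2)] at hs1
      have hsub : Force G.E (G.V1 \ A) G.V0 ⊆
          ⋃ S ∈ SCCs G.V0 (twoStep G c A), Force G.E (G.V1 \ A) S :=
        Set.subset_biUnion_of_mem hV0scc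
      rw [hs1] at hsub
      exact Set.subset_empty_iff.mp hsub
    have hV1A : G.V1 ⊆ A := by
      intro v hv1
      by_contra hvA
      obtain ⟨z, hz⟩ := hout v (Or.inr hv1)
      have hz0 : z ∈ G.V0 := tgt_V0 hdisj hEsub hz hv1
      have hvF : v ∈ Force G.E (G.V1 \ A) G.V0 := by
        refine ⟨⟨⟨⟨z, hz0, hz⟩, ?_⟩, ⟨hv1, hvA⟩⟩, ?_⟩
        · exact Set.disjoint_right.mp hdisj hv1
        · intro u hu
          exact tgt_V0 hdisj hEsub hu hv1
      rw [hforce0] at hvF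
      exact hvF
    obtain ⟨a0, ha0, hra⟩ : ∃ a0, a0 ∈ G.V0 ∧ Reach (E0 G ∪ chosen c A) a a0 := by
      rcases ha with ha' | ha'
      · exact ⟨a, ha', .refl⟩
      · have haA : a ∈ A := hV1A ha'
        have hae := (hA a haA).2
        exact ⟨c a, tgt_V0 hdisj hEsub hae ha',
          Relation.ReflTransGen.single (Or.inr ⟨a, haA, rfl⟩)⟩
    obtain ⟨b0, hb0, hrb⟩ : ∃ b0, b0 ∈ G.V0 ∧ Reach (E0 G ∪ chosen c A) b0 b := by
      rcases hb with hb' | hb'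
      · exact ⟨b, hb', .refl⟩
      · obtain ⟨w, hwv, hwne⟩ := hother b
        rcases Relation.ReflTransGen.cases_tail (hG w hwv b (Or.inr hb')) with h1 | ⟨z, _, hzb⟩
        · exact absurd h1.symm hwne
        · have hz0 : z ∈ G.V0 := src_V0 hdisj hEsub hzb hb'
          exact ⟨z, hz0, Relation.ReflTransGen.single (Or.inl ⟨hzb, hz0⟩)⟩
    exact hra.trans ((reach_up hdisj hEsub hA (h'' a0 ha0 b0 hb0)).trans hrb)
end Games
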